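/- Let μ > 0, h : (a,b) → ℝ positive with h'/h > 0, and let u satisfy u'' = -(h'/h)·u' - μ·u on (a,b) with u > 0 on (a,b) and u(a) = u(b) = 0. Then u is unimodal: there exists c ∈ (a,b) such that u is increasing on (a,c) and decreasing on (c,b). -/

import Mathlib

open Set Filter Topology

/-- Auxiliary lemma: if `v c = 0` and at every zero of `v` in `[c,b)` the derivative
`w` is negative, then `v < 0` on `(c,b)`. -/
lemma aux_neg (c b : ℝ) (v w : ℝ → ℝ) (hcb : c < b)
    (hd : ∀ x ∈ Set.Ico c b, HasDerivAt v (w x) x)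
    (h0 : v c = 0)
    (hneg : ∀ x ∈ Set.Ico c b, v x = 0 → w x < 0) :
    ∀ x ∈ Set.Ioo c b, v x < 0 := by
  have key : ∀ z ∈ Set.Ico c b, v z = 0 →
      (∀ᶠ x in 𝓝[>] z, v x < 0) ∧ (∀ᶠ x in 𝓝[<] z, 0 < v x) := by
    intro z hz hvz
    have hw := hneg z hz hvz
    have hslope : Filter.Tendsto (slope v z) (𝓝[≠] z) (𝓝 (w z)) :=
      (hasDerivAt_iff_tendsto_slope.mp (hd z hz))
    have hev : ∀ᶠ x in 𝓝[≠] z, slope v z x < 0 :=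
      hslope.eventually (eventually_lt_nhds hw)
    constructor
    · have h1 : ∀ᶠ x in 𝓝[>] z, slope v z x < 0 :=
        hev.filter_mono (nhdsWithin_mono z (fun x hx => ne_of_gt hx))
      filter_upwards [h1, self_mem_nhdsWithin] with x hx hx'
      have hxz : (0:ℝ) < x - z := sub_pos.mpr hx'
      have := hx
      rw [slope_def_field] at this
      have hdiv : (v x - v z) / (x - z) < 0 := by
        simpa [div_sub_div_same] using this
      have := (div_neg_iff.mp hdiv)
      rcases this with ⟨h1', h2'⟩ | ⟨h1', h2'⟩
      · linarith
      · linarith [hvz, sub_neg.mp h1']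
    · have h1 : ∀ᶠ x in 𝓝[<] z, slope v z x < 0 :=
        hev.filter_mono (nhdsWithin_mono z (fun x hx => ne_of_lt hx))
      filter_upwards [h1, self_mem_nhdsWithin] with x hx hx'
      have hxz : x - z < 0 := sub_neg.mpr hx'
      rw [slope_def_field] at hx
      have hdiv : (v x - v z) / (x - z) < 0 := by
        simpa [div_sub_div_same] using hx
      rcases div_neg_iff.mp hdiv with ⟨h1', h2'⟩ | ⟨h1', h2'⟩
      · linarith
      · linarith
  intro x hx
  by_contra hvx
  push_neg at hvx
  set S : Set ℝ := {t ∈ Set.Ioc c x | 0 ≤ v t} with hS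
  have hxS : x ∈ S := ⟨⟨hx.1, le_refl x⟩, hvx⟩
  have hSne : S.Nonempty := ⟨x, hxS⟩
  have hbdd : BddBelow S := ⟨c, fun t ht => le_of_lt ht.1.1⟩
  set m := sInf S with hm
  have hmle : m ≤ x := csInf_le hbdd hxS
  have hmgec : c ≤ m := le_csInf hSne (fun t ht => le_of_lt ht.1.1)
  -- v < 0 just right of c
  obtain ⟨hev_c, _⟩ := key c ⟨le_refl c, hcb⟩ h0
  obtain ⟨d, hd1, hsub⟩ := mem_nhdsGT_iff_exists_Ioo_subset.mp hev_c
  have hcd : c < d := hd1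
  have hlb : ∀ s ∈ S, min d x ≤ s := by
    intro s hs
    by_contra hcon
    push_neg at hcon
    have hsd : s < d := lt_of_lt_of_le hcon (min_le_left _ _)
    have : v s < 0 := hsub ⟨hs.1.1, hsd⟩
    linarith [hs.2]
  have hmgt : c < m := lt_of_lt_of_le (lt_min hcd hx.1) (le_csInf hSne hlb)
  have hmIco : m ∈ Set.Ico c b := ⟨hmgec, lt_of_le_of_lt hmle hx.2⟩
  have hmcont : ContinuousAt v m := (hd m hmIco).continuousAt
  -- v < 0 on (c, m)
  have hvneg : ∀ t ∈ Set.Ioo c m, v t < 0 := by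
    intro t ht
    by_contra hcon
    push_neg at hcon
    have : t ∈ S := ⟨⟨ht.1, le_of_lt (lt_of_lt_of_le ht.2 hmle)⟩, hcon⟩
    exact absurd (csInf_le hbdd this) (not_le.mpr ht.2)
  -- v m ≤ 0 via limit from the left
  have hvmle : v m ≤ 0 := by
    have htend : Filter.Tendsto v (𝓝[<] m) (𝓝 (v m)) :=
      hmcont.continuousWithinAt.tendsto
    have hev : ∀ᶠ t in 𝓝[<] m, v t ≤ 0 := by
      filter_upwards [Ioo_mem_nhdsLT_of_mem ⟨hmgt, le_refl m⟩] with t ht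
      exact le_of_lt (hvneg t ht)
    exact le_of_tendsto htend hev
  -- v m ≥ 0 via closure of S
  have hvmge : 0 ≤ v m := by
    have hmcl : m ∈ closure S := csInf_mem_closure hSne hbdd
    have hne : (𝓝[S] m).NeBot := mem_closure_iff_nhdsWithin_neBot.mp hmcl
    have htend : Filter.Tendsto v (𝓝[S] m) (𝓝 (v m)) :=
      hmcont.continuousWithinAt.tendsto
    have hev : ∀ᶠ t in 𝓝[S] m, 0 ≤ v t := by
      filter_upwards [self_mem_nhdsWithin] with t ht
      exact ht.2
    exact ge_of_tendsto htend hev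
  have hvm : v m = 0 := le_antisymm hvmle hvmge
  obtain ⟨_, hev_left⟩ := key m hmIco hvm
  have hev2 : ∀ᶠ t in 𝓝[<] m, v t < 0 := by
    filter_upwards [Ioo_mem_nhdsLT_of_mem ⟨hmgt, le_refl m⟩] with t ht
    exact hvneg t ht
  obtain ⟨t, ht1, ht2⟩ := (hev_left.and hev2).exists
  linarith

theorem stmt3 (a b μ : ℝ) (hab : a < b) (hμ : 0 < μ)
    (h u u' u'' : ℝ → ℝ)
    (hcont : ContinuousOn u (Set.Icc a b))
    (hu' : ∀ x ∈ Set.Ioo a b, HasDerivAt u (u' x) x)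
    (hu'' : ∀ x ∈ Set.Ioo a b, HasDerivAt u' (u'' x) x)
    (hpos : ∀ x ∈ Set.Ioo a b, 0 < u x)
    (hhpos : ∀ x ∈ Set.Ioo a b, 0 < h x)
    (hh : ∀ x ∈ Set.Ioo a b, 0 < deriv h x / h x)
    (hode : ∀ x ∈ Set.Ioo a b,
      u'' x = -(deriv h x / h x) * u' x - μ * u x)
    (hua : u a = 0) (hub : u b = 0) :
    ∃ c ∈ Set.Ioo a b, MonotoneOn u (Set.Ioc a c) ∧ AntitoneOn u (Set.Ico c b) := by
  -- maximum point
  obtain ⟨c, hcIcc, hmax⟩ := isCompact_Icc.exists_isMaxOn (Set.nonempty_Icc.mpr (le_of_lt hab)) hcont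
  have hmid : (a+b)/2 ∈ Set.Ioo a b := ⟨by linarith, by linarith⟩
  have hucpos : 0 < u c := lt_of_lt_of_le (hpos _ hmid) (hmax (Set.mem_Icc.mpr ⟨by linarith, by linarith⟩))
  have hca : c ≠ a := fun hc => by rw [hc, hua] at hucpos; linarith
  have hcb : c ≠ b := fun hc => by rw [hc, hub] at hucpos; linarith
  have hc : c ∈ Set.Ioo a b :=
    ⟨lt_of_le_of_ne hcIcc.1 (Ne.symm hca), lt_of_le_of_ne hcIcc.2 hcb⟩
  -- u' c = 0
  have hlocmax : IsLocalMax u c := hmax.isLocalMax (Icc_mem_nhds hc.1 hc.2)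
  have hu'c : u' c = 0 := hlocmax.hasDerivAt_eq_zero (hu' c hc)
  -- key fact: at zeros of u', u'' < 0
  have hcrit : ∀ x ∈ Set.Ioo a b, u' x = 0 → u'' x < 0 := by
    intro x hx h0
    rw [hode x hx, h0]
    have := hpos x hx
    nlinarith
  -- u' < 0 on (c, b)
  have hR : ∀ x ∈ Set.Ioo c b, u' x < 0 := by
    apply aux_neg c b u' u'' hc.2
    · intro x hx
      exact hu'' x ⟨lt_of_lt_of_le hc.1 hx.1, hx.2⟩
    · exact hu'c
    · intro x hx h0
      exact hcrit x ⟨lt_of_lt_of_le hc.1 hx.1, hx.2⟩ h0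
  -- u' > 0 on (a, c), via reflection
  have hL : ∀ x ∈ Set.Ioo a c, 0 < u' x := by
    have hmem : ∀ x ∈ Set.Ico (-c) (-a), -x ∈ Set.Ioo a b := by
      intro x hx
      constructor
      · linarith [hx.2]
      · have : -x ≤ c := by linarith [hx.1]
        linarith [hc.2]
    have := aux_neg (-c) (-a) (fun y => -u' (-y)) (fun y => u'' (-y))
      (by linarith [hc.1])
      (by
        intro x hx
        have h1 : HasDerivAt (fun y : ℝ => u' (-y)) (u'' (-x) * (-1)) x := by
          exact HasDerivAt.comp x (hu'' (-x) (hmem x hx)) (hasDerivAt_neg x)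
        have h2 := h1.neg
        simp at h2
        exact h2)
      (by simp [hu'c])
      (by
        intro x hx h0
        have h0' : u' (-x) = 0 := by
          have := h0
          simp at this
          linarith [this]
        exact hcrit (-x) (hmem x hx) h0')
    intro x hx
    have hx' : -x ∈ Set.Ioo (-c) (-a) := ⟨by linarith [hx.2], by linarith [hx.1]⟩
    have := this (-x) hx'
    simp at this
    linarith
  -- conclude monotonicity
  have hmono : StrictMonoOn u (Set.Ioc a c) := by
    apply strictMonoOn_of_deriv_pos (convex_Ioc a c)
    · exact hcont.mono (Set.Ioc_subset_Icc_self.trans (Set.Icc_subset_Icc (le_refl a) (le_of_lt hc.2)))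
    · intro x hx
      rw [interior_Ioc] at hx
      rw [(hu' x ⟨hx.1, lt_trans hx.2 hc.2⟩).deriv]
      exact hL x hx
  have hanti : StrictAntiOn u (Set.Ico c b) := by
    apply strictAntiOn_of_deriv_neg (convex_Ico c b)
    · exact hcont.mono ((Set.Ico_subset_Icc_self).trans (Set.Icc_subset_Icc (le_of_lt hc.1) (le_refl b)))
    · intro x hx
      rw [interior_Ico] at hx
      rw [(hu' x ⟨lt_trans hc.1 hx.1, hx.2⟩).deriv]
      exact hR x hx
  exact ⟨c, hc, hmono.monotoneOn, hanti.antitoneOn⟩
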